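/- (Positivity of the low order update, Theorem 5.1.) Let J be a finite index set, let u ∈ A, let ū_j ∈ A for each j ∈ J, let λ_j ≥ 0 for each j ∈ J, let m > 0, set λ := Σ_{j∈J} λ_j, and let τ ≥ 0 satisfy 2τλ ≤ m. Then the forward-Euler low order update u′ := (1 − 2τλ/m)·u + (2τ/m)·Σ_{j∈J} λ_j·ū_j lies in the admissible set A. -/

import Mathlib

/-- States of the 2D compressible flow equations: `u = (ρ, m, E)`. -/
abbrev State : Type := ℝ × EuclideanSpace ℝ (Fin 2) × ℝ

/-- The internal energy `ρe(u) = E - ‖m‖²/(2ρ)`. -/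
noncomputable def internalEnergy (u : State) : ℝ :=
  u.2.2 - ‖u.2.1‖ ^ 2 / (2 * u.1)

/-- The admissible set `A = {u | ρ > 0 ∧ ρe(u) > 0}`. -/
noncomputable def admissibleSet : Set State :=
  {u | 0 < u.1 ∧ 0 < internalEnergy u}

/-- Convexity of the admissible set. -/
lemma admissible_convex : Convex ℝ admissibleSet := by
  rintro ⟨ρ₁, m₁, E₁⟩ ⟨h1ρ, h1e⟩ ⟨ρ₂, m₂, E₂⟩ ⟨h2ρ, h2e⟩ a b ha hb hab
  simp only [admissibleSet, internalEnergy, Set.mem_setOf_eq, Prod.smul_mk, Prod.mk_add_mk,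
    smul_eq_mul] at h1ρ h1e h2ρ h2e ⊢
  have hρ : 0 < a * ρ₁ + b * ρ₂ := by
    rcases ha.eq_or_lt with h | h
    · nlinarith
    · nlinarith [mul_pos h h1ρ, mul_nonneg hb h2ρ.le]
  refine ⟨hρ, ?_⟩
  set A := ‖m₁‖ with hA
  set B := ‖m₂‖ with hB
  have hA0 : 0 ≤ A := norm_nonneg _
  have hB0 : 0 ≤ B := norm_nonneg _
  have hn : ‖a • m₁ + b • m₂‖ ≤ a * A + b * B := by
    calc ‖a • m₁ + b • m₂‖ ≤ ‖a • m₁‖ + ‖b • m₂‖ := norm_add_le _ _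
    _ = a * A + b * B := by rw [norm_smul, norm_smul, Real.norm_eq_abs, Real.norm_eq_abs,
        abs_of_nonneg ha, abs_of_nonneg hb]
  have hn0 : 0 ≤ ‖a • m₁ + b • m₂‖ := norm_nonneg _
  set n := ‖a • m₁ + b • m₂‖ with hn'
  have key2 : n ^ 2 * (ρ₁ * ρ₂) ≤ (a * ρ₁ + b * ρ₂) * (a * ρ₂ * A ^ 2 + b * ρ₁ * B ^ 2) := by
    nlinarith [mul_self_le_mul_self hn0 hn, mul_pos h1ρ h2ρ,
      mul_nonneg (mul_nonneg ha hb) (sq_nonneg (ρ₂ * A - ρ₁ * B)), sq_nonneg (A - B)]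
  have key : n ^ 2 / (2 * (a * ρ₁ + b * ρ₂)) ≤
      (a * A ^ 2 * ρ₂ + b * B ^ 2 * ρ₁) / (2 * ρ₁ * ρ₂) := by
    rw [div_le_div_iff₀ (by positivity) (by positivity)]
    nlinarith [key2]
  have split : (a * A ^ 2 * ρ₂ + b * B ^ 2 * ρ₁) / (2 * ρ₁ * ρ₂)
      = a * (A ^ 2 / (2 * ρ₁)) + b * (B ^ 2 / (2 * ρ₂)) := by
    field_simp
  rw [split] at key
  rcases ha.eq_or_lt with h | h
  · have hb1 : b = 1 := by linarith
    subst hb1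
    rw [← h] at key ⊢
    simp only [zero_mul, one_mul, zero_add] at key ⊢
    linarith
  · have t1 : 0 < a * (E₁ - A ^ 2 / (2 * ρ₁)) := mul_pos h (by linarith)
    have t2 : 0 ≤ b * (E₂ - B ^ 2 / (2 * ρ₂)) := mul_nonneg hb (by linarith)
    nlinarith

/-- Positivity of the low order forward-Euler update (Theorem 5.1): under the
CFL condition `2τλ ≤ m`, the update
`u' = (1 - 2τλ/m) u + (2τ/m) Σ_j λ_j ū_j` is admissible whenever `u` and all
intermediate states `ū_j` are admissible. -/
theorem low_order_update_admissible {J : Type*} [Fintype J]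
    (u : State) (hu : u ∈ admissibleSet)
    (ubar : J → State) (hubar : ∀ j, ubar j ∈ admissibleSet)
    (lam : J → ℝ) (hlam : ∀ j, 0 ≤ lam j)
    (m : ℝ) (hm : 0 < m) (τ : ℝ) (hτ : 0 ≤ τ)
    (hCFL : 2 * τ * (∑ j, lam j) ≤ m) :
    (1 - 2 * τ * (∑ j, lam j) / m) • u + (2 * τ / m) • ∑ j, lam j • ubar j
      ∈ admissibleSet := by
  have hm' : m ≠ 0 := ne_of_gt hm
  set w : Option J → ℝ := fun o => o.elim (1 - 2 * τ * (∑ j, lam j) / m)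
    (fun j => 2 * τ * lam j / m) with hw
  set z : Option J → State := fun o => o.elim u ubar with hz
  have hw0 : ∀ o ∈ (Finset.univ : Finset (Option J)), 0 ≤ w o := by
    rintro (_ | j) _
    · simp only [hw, Option.elim]
      rw [sub_nonneg, div_le_one hm]
      exact hCFL
    · simp only [hw, Option.elim]
      exact div_nonneg (by nlinarith [hlam j]) hm.le
  have hw1 : ∑ o : Option J, w o = 1 := by
    rw [Fintype.sum_option]
    simp only [hw, Option.elim]
    rw [← Finset.sum_div, ← Finset.mul_sum]
    field_simp
    ring
  have hzmem : ∀ o ∈ (Finset.univ : Finset (Option J)), z o ∈ admissibleSet := by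
    rintro (_ | j) _
    · exact hu
    · exact hubar j
  have key := admissible_convex.sum_mem hw0 hw1 hzmem
  rw [Fintype.sum_option] at key
  simp only [hw, hz, Option.elim] at key
  convert key using 2
  rw [Finset.smul_sum]
  refine Finset.sum_congr rfl fun j _ => ?_
  rw [smul_smul]
  congr 1
  field_simp
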